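/- Let κ ∈ ℂ, S > 0, and let R > 1 satisfy exp(R) ≥ exp(R−1) + S + 1 + |κ|. Then for every z ∈ ℂ with r := Re(z) ≥ R and |Im(E_κ(z))| < S, one has |Re(E_κ(z))| > exp(r−1) + 1. -/

import Mathlib

open Complex

/-- If `R > 1` satisfies `exp R ≥ exp (R-1) + S + 1 + |κ|`, then any `z` with
`Re z ≥ R` and `|Im (E_κ z)| < S` satisfies `|Re (E_κ z)| > exp (Re z - 1) + 1`. -/
theorem re_image_large (κ : ℂ) (S R : ℝ) (hS : 0 < S) (hR : 1 < R)
    (hRineq : Real.exp R ≥ Real.exp (R - 1) + S + 1 + ‖κ‖) :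
    ∀ z : ℂ, R ≤ z.re → |(Complex.exp z + κ).im| < S →
      |(Complex.exp z + κ).re| > Real.exp (z.re - 1) + 1 := by
  intro z hz him
  set w := Complex.exp z + κ with hw
  have h1 : ‖w‖ ≤ |w.re| + |w.im| := Complex.norm_le_abs_re_add_abs_im w
  have h2 : Real.exp z.re ≤ ‖w‖ + ‖κ‖ := by
    calc Real.exp z.re = ‖Complex.exp z‖ := (Complex.norm_exp z).symm
    _ = ‖w - κ‖ := by rw [hw]; ring_nf
    _ ≤ ‖w‖ + ‖κ‖ := by
        simpa [sub_eq_add_neg] using (norm_add_le w (-κ))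
  -- monotonicity: exp r - exp (r-1) ≥ exp R - exp (R-1)
  have key : Real.exp (z.re - 1) + S + 1 + ‖κ‖ ≤ Real.exp z.re := by
    have h3 : Real.exp R - Real.exp (R - 1) ≤ Real.exp z.re - Real.exp (z.re - 1) := by
      have hmono : Real.exp (R - 1) ≤ Real.exp (z.re - 1) :=
        Real.exp_le_exp.mpr (by linarith)
      have : Real.exp R = Real.exp (R - 1) * Real.exp 1 := by
        rw [← Real.exp_add]; ring_nf
      have hz' : Real.exp z.re = Real.exp (z.re - 1) * Real.exp 1 := by
        rw [← Real.exp_add]; ring_nf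
      have he : (1:ℝ) ≤ Real.exp 1 := by
        have := Real.add_one_le_exp (1:ℝ); linarith
      nlinarith [Real.exp_pos (R - 1), Real.exp_pos (z.re - 1)]
    linarith
  have := abs_nonneg w.im
  linarith
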